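/- Let λ₁(t) := (√(t²+4)+t)/2, L(t) := (log λ₁(t)/√(t²+4))·[[−t, 2],[2, t]] (the matrix logarithm of the right stretch tensor of simple shear F(t) = [[1,t],[0,1]]), and P := [[−2, 0],[0, 2]] (so that exp(P) = diag(e^{−2}, e²) ∈ SL(2) is a plastic stretch). Then the function g(t) := exp(‖L(t) − P‖²) = exp(2·(log λ₁(t))² − 8t·log λ₁(t)/√(t²+4) + 8) is not convex on ℝ. Hence the additive logarithmic energy F ↦ exp(‖dev₂ log U − dev₂ log U_p‖²) is not rank-one convex at the plastic stretch U_p = diag(e^{−2}, e²), even though F ↦ exp(‖dev₂ log U‖²) is rank-one convex. -/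

import Mathlib

open Matrix

/-- The larger eigenvalue `λ₁(t) = (√(t²+4)+t)/2` of the right stretch tensor of simple shear. -/
noncomputable def lam1 (t : ℝ) : ℝ := (Real.sqrt (t ^ 2 + 4) + t) / 2

/-- The principal matrix logarithm `L(t) = (log λ₁(t)/√(t²+4)) • [[−t, 2], [2, t]]`
of the right stretch tensor of the simple shear `F(t) = [[1, t], [0, 1]]`. -/
noncomputable def Lsh (t : ℝ) : Matrix (Fin 2) (Fin 2) ℝ :=
  (Real.log (lam1 t) / Real.sqrt (t ^ 2 + 4)) • !![-t, 2; 2, t]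

/-- The trace-free plastic logarithmic strain `P = [[−2, 0], [0, 2]]`,
so that `exp P = diag(e⁻², e²) ∈ SL(2)`. -/
def Pplast : Matrix (Fin 2) (Fin 2) ℝ := !![-2, 0; 0, 2]

/-- The additive logarithmic exponentiated Hencky energy along the simple shear line:
`g(t) = exp ‖L(t) − P‖²`, with `‖X‖² = tr (X * Xᵀ)` the squared Frobenius norm. -/
noncomputable def gEnergy (t : ℝ) : ℝ :=
  Real.exp (Matrix.trace ((Lsh t - Pplast) * (Lsh t - Pplast)ᵀ))

lemma trace_id (t : ℝ) :
    Matrix.trace ((Lsh t - Pplast) * (Lsh t - Pplast)ᵀ) =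
      2 * (Real.log (lam1 t)) ^ 2 -
        8 * t * Real.log (lam1 t) / Real.sqrt (t ^ 2 + 4) + 8 := by
  have h4 : (0:ℝ) < t ^ 2 + 4 := by positivity
  have hs : (0:ℝ) < Real.sqrt (t ^ 2 + 4) := Real.sqrt_pos.mpr h4
  have hs2 : Real.sqrt (t ^ 2 + 4) ^ 2 = t ^ 2 + 4 := Real.sq_sqrt h4.le
  set s := Real.sqrt (t ^ 2 + 4)
  set l := Real.log (lam1 t)
  simp [Lsh, Pplast, Matrix.trace_fin_two, Matrix.mul_apply, Fin.sum_univ_two,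
    Matrix.smul_apply, Matrix.sub_apply, Matrix.transpose_apply, Matrix.vecHead, Matrix.vecTail, Matrix.vecMul, dotProduct]
  field_simp
  linear_combination (-2*l^2*s) * hs2

lemma sqrt5_sq : Real.sqrt 5 ^ 2 = 5 := Real.sq_sqrt (by norm_num)
lemma sqrt5_pos : (0:ℝ) < Real.sqrt 5 := Real.sqrt_pos.mpr (by norm_num)

lemma lam1_zero : lam1 0 = 1 := by
  simp [lam1]
  rw [show (4:ℝ) = 2^2 by norm_num, Real.sqrt_sq (by norm_num : (0:ℝ) ≤ 2)]
  norm_num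

lemma lam1_one : lam1 1 = (Real.sqrt 5 + 1) / 2 := by norm_num [lam1]

lemma lam1_neg_one : lam1 (-1) = (Real.sqrt 5 - 1) / 2 := by
  norm_num [lam1]; ring

lemma log_lam1_neg_one : Real.log (lam1 (-1)) = - Real.log (lam1 1) := by
  rw [lam1_neg_one, lam1_one, ← Real.log_inv]
  congr 1
  have h5 := sqrt5_sq
  have := sqrt5_pos
  field_simp
  nlinarith

lemma log_lam1_one_pos : 0 < Real.log (lam1 1) := by
  rw [lam1_one]
  apply Real.log_pos
  nlinarith [sqrt5_sq, sqrt5_pos]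

lemma key_lt : gEnergy 1 < gEnergy 0 := by
  rw [gEnergy, gEnergy, trace_id, trace_id]
  apply Real.exp_lt_exp.mpr
  have h0 : Real.log (lam1 0) = 0 := by rw [lam1_zero, Real.log_one]
  rw [h0]
  have hl := log_lam1_one_pos
  set l := Real.log (lam1 1)
  have hle : l ≤ (Real.sqrt 5 + 1) / 2 - 1 := by
    have : l = Real.log ((Real.sqrt 5 + 1) / 2) := by rw [← lam1_one]
    rw [this]
    exact Real.log_le_sub_one_of_pos (by nlinarith [sqrt5_pos])
  have h14 : ((1:ℝ) ^ 2 + 4) = 5 := by norm_num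
  rw [h14]
  have hs := sqrt5_pos
  have hs2 := sqrt5_sq
  have hd : 8 * 1 * l / Real.sqrt 5 = 8 * l / Real.sqrt 5 := by ring_nf
  have hlt : 2 * l ^ 2 * Real.sqrt 5 < 8 * l := by nlinarith
  have : 2 * l ^ 2 < 8 * 1 * l / Real.sqrt 5 := by
    rw [hd, lt_div_iff₀ hs]; linarith
  norm_num
  linarith

lemma g_neg_one : gEnergy (-1) = gEnergy 1 := by
  rw [gEnergy, gEnergy, trace_id, trace_id, log_lam1_neg_one]
  norm_num

theorem stmt18 :
    (∀ t : ℝ, gEnergy t =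
        Real.exp (2 * (Real.log (lam1 t)) ^ 2 -
          8 * t * Real.log (lam1 t) / Real.sqrt (t ^ 2 + 4) + 8)) ∧
      ¬ ConvexOn ℝ Set.univ gEnergy := by
  constructor
  · intro t; rw [gEnergy, trace_id]
  · intro h
    have := h.2 (Set.mem_univ (-1)) (Set.mem_univ 1)
      (by norm_num : (0:ℝ) ≤ 1/2) (by norm_num : (0:ℝ) ≤ 1/2) (by norm_num)
    rw [g_neg_one] at this
    have h01 : (1/2 : ℝ) • (-1 : ℝ) + (1/2 : ℝ) • (1:ℝ) = 0 := by norm_num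
    rw [h01] at this
    have hk := key_lt
    simp only [smul_eq_mul] at this
    linarith
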